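/- Let G ≤ Aut(T) be a group with the subgroup induction property such that the rigid stabilizer Rist_G(v) is infinite for every vertex v of T. Then G is a torsion group. -/

import Mathlib

/-- Vertices of the rooted regular tree over alphabet `A`: finite words in `A`. -/
abbrev Vert (A : Type*) := List A

/-- The automorphism group of the rooted regular tree with vertex set `Vert A`:
length-preserving permutations of the vertices that preserve the prefix order. -/
def treeAut (A : Type*) : Subgroup (Equiv.Perm (Vert A)) where
  carrier := { g | (∀ v : Vert A, (g v).length = v.length) ∧
    ∀ v w : Vert A, v <+: w ↔ g v <+: g w }
  one_mem' := ⟨fun _ => rfl, fun _ _ => Iff.rfl⟩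
  mul_mem' := by
    rintro g h ⟨hg1, hg2⟩ ⟨hh1, hh2⟩
    refine ⟨fun v => ?_, fun v w => ?_⟩
    · simp only [Equiv.Perm.mul_apply, hg1, hh1]
    · simpa only [Equiv.Perm.mul_apply] using (hh2 v w).trans (hg2 (h v) (h w))
  inv_mem' := by
    rintro g ⟨hg1, hg2⟩
    refine ⟨fun v => ?_, fun v w => ?_⟩
    · have h1 := hg1 (g⁻¹ v)
      simp only [Equiv.Perm.coe_inv, Equiv.apply_symm_apply] at h1
      exact h1.symm
    · have h2 := hg2 (g⁻¹ v) (g⁻¹ w)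
      simp only [Equiv.Perm.coe_inv, Equiv.apply_symm_apply] at h2
      exact h2.symm

open scoped Classical in
/-- The section `φ_v(g)` of an automorphism `g` at the vertex `v`: the unique
permutation `s` with `g (v ++ w) = g v ++ s w` for all `w` (it exists and is unique
whenever `g` is a tree automorphism). -/
noncomputable def sect {A : Type*} (g : Equiv.Perm (Vert A)) (v : Vert A) :
    Equiv.Perm (Vert A) :=
  if h : ∃ s : Equiv.Perm (Vert A), ∀ w : Vert A, g (v ++ w) = g v ++ s w then h.choose else 1

/-- The `n`-th level of the tree: words of length `n`. -/
def level (A : Type*) (n : ℕ) : Set (Vert A) := { v | v.length = n }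

/-- The pointwise stabilizer in `G` of a set `S` of vertices. -/
def stabSet {A : Type*} (G : Subgroup (Equiv.Perm (Vert A))) (S : Set (Vert A)) :
    Subgroup (Equiv.Perm (Vert A)) where
  carrier := { g | g ∈ G ∧ ∀ v ∈ S, g v = v }
  one_mem' := ⟨G.one_mem, fun _ _ => rfl⟩
  mul_mem' := by
    rintro g h ⟨hg, hg2⟩ ⟨hh, hh2⟩
    exact ⟨G.mul_mem hg hh, fun v hv => by
      simp only [Equiv.Perm.mul_apply, hh2 v hv, hg2 v hv]⟩
  inv_mem' := by
    rintro g ⟨hg, hg2⟩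
    refine ⟨G.inv_mem hg, fun v hv => ?_⟩
    conv_lhs => rw [← hg2 v hv]
    exact g.symm_apply_apply v

/-- The stabilizer in `G` of a single vertex `v`. -/
def vstab {A : Type*} (G : Subgroup (Equiv.Perm (Vert A))) (v : Vert A) :
    Subgroup (Equiv.Perm (Vert A)) := stabSet G {v}

/-- The pointwise stabilizer in `G` of the `n`-th level. -/
def lstab {A : Type*} (G : Subgroup (Equiv.Perm (Vert A))) (n : ℕ) :
    Subgroup (Equiv.Perm (Vert A)) := stabSet G (level A n)

/-- The rigid stabilizer of a vertex `v` in `G`: elements of `G` acting trivially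
outside the subtree rooted at `v`. -/
def rist {A : Type*} (G : Subgroup (Equiv.Perm (Vert A))) (v : Vert A) :
    Subgroup (Equiv.Perm (Vert A)) where
  carrier := { g | g ∈ G ∧ ∀ w : Vert A, ¬ v <+: w → g w = w }
  one_mem' := ⟨G.one_mem, fun _ _ => rfl⟩
  mul_mem' := by
    rintro g h ⟨hg, hg2⟩ ⟨hh, hh2⟩
    exact ⟨G.mul_mem hg hh, fun w hw => by
      simp only [Equiv.Perm.mul_apply, hh2 w hw, hg2 w hw]⟩
  inv_mem' := by
    rintro g ⟨hg, hg2⟩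
    refine ⟨G.inv_mem hg, fun w hw => ?_⟩
    conv_lhs => rw [← hg2 w hw]
    exact g.symm_apply_apply w

/-- The rigid stabilizer of the `n`-th level: the subgroup generated by the rigid
stabilizers of the vertices of level `n`. -/
def ristLevel {A : Type*} (G : Subgroup (Equiv.Perm (Vert A))) (n : ℕ) :
    Subgroup (Equiv.Perm (Vert A)) := ⨆ v ∈ level A n, rist G v

/-- The subgroup `φ_v(H)` generated by (equivalently, consisting of, when `H`
stabilizes `v`) the sections at `v` of the elements of `H`. -/
def sectGrp {A : Type*} (H : Subgroup (Equiv.Perm (Vert A))) (v : Vert A) :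
    Subgroup (Equiv.Perm (Vert A)) :=
  Subgroup.closure ((fun g => sect g v) '' (H : Set (Equiv.Perm (Vert A))))

/-- A transversal of the tree: a finite set of vertices met exactly once by every
infinite ray from the root. -/
def IsTransversal (A : Type*) (X : Set (Vert A)) : Prop :=
  X.Finite ∧ ∀ ω : ℕ → A, ∃! n : ℕ, (List.ofFn fun i : Fin n => ω i.val) ∈ X

/-- The subgroup induction property. -/
def HasSGIP {A : Type*} (G : Subgroup (Equiv.Perm (Vert A))) : Prop :=
  ∀ H : Subgroup (Equiv.Perm (Vert A)), H ≤ G → H.FG →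
    ∃ X : Set (Vert A), IsTransversal A X ∧ ∀ v ∈ X,
      sectGrp (stabSet H X) v = ⊥ ∨
      (sectGrp (stabSet H X) v).relIndex (sectGrp (vstab G v) v) ≠ 0

/-- `G` acts transitively on every level of the tree. -/
def LevelTransitive {A : Type*} (G : Subgroup (Equiv.Perm (Vert A))) : Prop :=
  ∀ v w : Vert A, v.length = w.length → ∃ g ∈ G, g v = w

/-- Weakly branch: level-transitive with all rigid vertex stabilizers infinite. -/
def IsWeaklyBranch {A : Type*} (G : Subgroup (Equiv.Perm (Vert A))) : Prop :=
  LevelTransitive G ∧ ∀ v : Vert A, (rist G v : Set (Equiv.Perm (Vert A))).Infinite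

/-- Branch: weakly branch and every level rigid stabilizer has finite index in `G`. -/
def IsBranch {A : Type*} (G : Subgroup (Equiv.Perm (Vert A))) : Prop :=
  IsWeaklyBranch G ∧ ∀ n : ℕ, (ristLevel G n).relIndex G ≠ 0

/-- Self-similar: all sections of vertex stabilizers land in `G`. -/
def SelfSimilar {A : Type*} (G : Subgroup (Equiv.Perm (Vert A))) : Prop :=
  ∀ v : Vert A, sectGrp (vstab G v) v ≤ G

/-- Self-replicating: `φ_v(Stab_G(v)) = G` for every vertex `v`. -/
def SelfReplicating {A : Type*} (G : Subgroup (Equiv.Perm (Vert A))) : Prop :=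
  ∀ v : Vert A, sectGrp (vstab G v) v = G

/-- Strongly self-replicating: self-similar and `φ_v(Stab_G(L_n)) = G` for every `n`
and every vertex `v` of level `n`. -/
def StronglySelfReplicating {A : Type*} (G : Subgroup (Equiv.Perm (Vert A))) : Prop :=
  SelfSimilar G ∧ ∀ (n : ℕ) (v : Vert A), v.length = n → sectGrp (lstab G n) v = G

/-- The congruence subgroup property: every finite-index subgroup of `G` contains
some level stabilizer. -/
def HasCSP {A : Type*} (G : Subgroup (Equiv.Perm (Vert A))) : Prop :=
  ∀ K : Subgroup (Equiv.Perm (Vert A)), K ≤ G → K.relIndex G ≠ 0 →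
    ∃ n : ℕ, lstab G n ≤ K

/-- A group is just infinite if it is infinite and all its proper quotients are
finite, i.e. every nontrivial normal subgroup has finite index. -/
def JustInfinite (G : Type*) [Group G] : Prop :=
  Infinite G ∧ ∀ N : Subgroup G, N.Normal → N ≠ ⊥ → N.index ≠ 0

/-- `Φ_F(G)`: the intersection of all maximal subgroups of finite index of `G`. -/
def PhiF (G : Type*) [Group G] : Subgroup G :=
  ⨅ M ∈ { M : Subgroup G | IsCoatom M ∧ M.index ≠ 0 }, M

/-- Two groups are commensurable if they have isomorphic finite-index subgroups. -/
def CommGroups (G₁ : Type*) (G₂ : Type*) [Group G₁] [Group G₂] : Prop :=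
  ∃ (H₁ : Subgroup G₁) (H₂ : Subgroup G₂),
    H₁.index ≠ 0 ∧ H₂.index ≠ 0 ∧ Nonempty (H₁ ≃* H₂)

section Infra
variable {A : Type*}

open Equiv List

lemma treeAut_len {g : Equiv.Perm (Vert A)} (hg : g ∈ treeAut A) (v : Vert A) :
    (g v).length = v.length := hg.1 v

lemma exists_sect {g : Equiv.Perm (Vert A)} (hg : g ∈ treeAut A) (v : Vert A) :
    ∃ s : Equiv.Perm (Vert A), ∀ w : Vert A, g (v ++ w) = g v ++ s w := by
  have key : ∀ (h : Equiv.Perm (Vert A)), h ∈ treeAut A → ∀ u w : Vert A,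
      h (u ++ w) = h u ++ (h (u ++ w)).drop u.length := by
    intro h hh u w
    obtain ⟨t, ht⟩ := (hh.2 u (u ++ w)).1 ⟨w, rfl⟩
    rw [← ht, List.drop_left' (hh.1 u)]
  refine ⟨⟨fun w => (g (v ++ w)).drop v.length,
          fun w => (g⁻¹ (g v ++ w)).drop v.length, ?_, ?_⟩, ?_⟩
  · intro w
    have h1 := key g hg v w
    have : g v ++ (g (v ++ w)).drop v.length = g (v ++ w) := h1.symm
    simp only
    rw [this, Equiv.Perm.coe_inv, Equiv.symm_apply_apply, List.drop_left' rfl]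
  · intro w
    have hginv : g⁻¹ ∈ treeAut A := (treeAut A).inv_mem hg
    have h2 : g⁻¹ (g v ++ w) = v ++ (g⁻¹ (g v ++ w)).drop v.length := by
      have := key g⁻¹ hginv (g v) w
      rwa [Equiv.Perm.coe_inv, Equiv.symm_apply_apply, hg.1 v] at this
    simp only
    rw [← h2, Equiv.Perm.coe_inv, Equiv.apply_symm_apply, List.drop_left' (hg.1 v)]
  · intro w
    exact key g hg v w

lemma sect_spec {g : Equiv.Perm (Vert A)} (hg : g ∈ treeAut A) (v w : Vert A) :
    g (v ++ w) = g v ++ sect g v w := by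
  rw [sect, dif_pos (exists_sect hg v)]
  exact (exists_sect hg v).choose_spec w

lemma sect_eq_of_spec {g : Equiv.Perm (Vert A)} (hg : g ∈ treeAut A) (v : Vert A)
    {s : Equiv.Perm (Vert A)} (hs : ∀ w, g (v ++ w) = g v ++ s w) : sect g v = s := by
  refine Equiv.ext fun w => ?_
  have := (sect_spec hg v w).symm.trans (hs w)
  exact List.append_cancel_left this

lemma sect_one (v : Vert A) : sect (1 : Equiv.Perm (Vert A)) v = 1 :=
  sect_eq_of_spec (treeAut A).one_mem v (fun _ => rfl)

lemma sect_mul {g h : Equiv.Perm (Vert A)} (hg : g ∈ treeAut A) (hh : h ∈ treeAut A)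
    (v : Vert A) : sect (g * h) v = sect g (h v) * sect h v := by
  apply sect_eq_of_spec ((treeAut A).mul_mem hg hh) v
  intro w
  simp only [Equiv.Perm.mul_apply]
  rw [sect_spec hh v w, sect_spec hg (h v) (sect h v w)]

lemma sect_inv {g : Equiv.Perm (Vert A)} (hg : g ∈ treeAut A) {v : Vert A}
    (hv : g v = v) : sect g⁻¹ v = (sect g v)⁻¹ := by
  have h1 := sect_mul ((treeAut A).inv_mem hg) hg v
  rw [inv_mul_cancel, sect_one, hv] at h1
  exact eq_inv_of_mul_eq_one_left h1.symm

lemma pow_fix {g : Equiv.Perm (Vert A)} {v : Vert A} (hv : g v = v) (n : ℕ) :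
    (g ^ n) v = v := by
  induction n with
  | zero => rfl
  | succ n ih => rw [pow_succ, Equiv.Perm.mul_apply, hv, ih]

lemma zpow_fix {g : Equiv.Perm (Vert A)} {v : Vert A} (hv : g v = v) (n : ℤ) :
    (g ^ n) v = v := by
  cases n with
  | ofNat n => exact pow_fix hv n
  | negSucc n =>
    rw [zpow_negSucc]
    have := pow_fix hv (n + 1)
    conv_lhs => rw [← this]
    exact Equiv.symm_apply_apply _ _

lemma sect_pow {g : Equiv.Perm (Vert A)} (hg : g ∈ treeAut A) {v : Vert A}
    (hv : g v = v) (n : ℕ) : sect (g ^ n) v = (sect g v) ^ n := by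
  induction n with
  | zero => simpa using sect_one v
  | succ n ih =>
    rw [pow_succ, pow_succ, sect_mul (Subgroup.pow_mem _ hg n) hg, hv, ih]

lemma sect_zpow {g : Equiv.Perm (Vert A)} (hg : g ∈ treeAut A) {v : Vert A}
    (hv : g v = v) (n : ℤ) : sect (g ^ n) v = (sect g v) ^ n := by
  cases n with
  | ofNat n => simpa using sect_pow hg hv n
  | negSucc n =>
    rw [zpow_negSucc, zpow_negSucc,
      sect_inv (Subgroup.pow_mem _ hg (n + 1)) (pow_fix hv (n + 1)), sect_pow hg hv]

end Infra
section Grp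
variable {A : Type*}

open Equiv List

lemma rist_fix {G : Subgroup (Equiv.Perm (Vert A))} (hG : G ≤ treeAut A)
    {h : Equiv.Perm (Vert A)} {v : Vert A} (hh : h ∈ rist G v) : h v = v := by
  by_contra hne
  have hlen : (h v).length = v.length := (hG hh.1).1 v
  have h1 : h (h v) = h v := hh.2 (h v) (fun hp => hne (hp.eq_of_length hlen.symm).symm)
  exact hne (h.injective h1)

lemma rist_child_fix {G : Subgroup (Equiv.Perm (Vert A))}
    {h : Equiv.Perm (Vert A)} {v : Vert A} {i : A} (hh : h ∈ rist G (v ++ [i])) :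
    h v = v := by
  refine hh.2 v (fun hp => ?_)
  have := hp.length_le
  simp at this

lemma rist_child_le_vstab {G : Subgroup (Equiv.Perm (Vert A))} (v : Vert A) (i : A) :
    rist G (v ++ [i]) ≤ vstab G v := by
  intro h hh
  refine ⟨hh.1, fun u hu => ?_⟩
  rw [Set.mem_singleton_iff] at hu
  subst hu
  exact rist_child_fix hh

lemma sect_inj_on_rist {G : Subgroup (Equiv.Perm (Vert A))} (hG : G ≤ treeAut A)
    {v : Vert A} {i : A} {h : Equiv.Perm (Vert A)} (hh : h ∈ rist G (v ++ [i]))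
    (hs : sect h v = 1) : h = 1 := by
  have hhT : h ∈ treeAut A := hG hh.1
  have hv : h v = v := rist_child_fix hh
  refine Equiv.ext fun u => ?_
  by_cases hpre : v <+: u
  · obtain ⟨w, rfl⟩ := hpre
    rw [sect_spec hhT v w, hv, hs]
    rfl
  · refine hh.2 u (fun hp => hpre ?_)
    exact (List.prefix_append v [i]).trans hp

/-- every element of the image of `rist G (v ++ [i])` under the section map at `v`
fixes all words not starting with `i`. -/
lemma sect_rist_mem_K {G : Subgroup (Equiv.Perm (Vert A))} (hG : G ≤ treeAut A)
    {v : Vert A} {i : A} {h : Equiv.Perm (Vert A)} (hh : h ∈ rist G (v ++ [i])) :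
    sect h v ∈ rist (⊤ : Subgroup (Equiv.Perm (Vert A))) [i] := by
  refine ⟨trivial, fun w hw => ?_⟩
  have hhT : h ∈ treeAut A := hG hh.1
  have hv : h v = v := rist_child_fix hh
  have h1 : h (v ++ w) = v ++ w := by
    refine hh.2 (v ++ w) (fun hp => hw ?_)
    obtain ⟨t, ht⟩ := hp
    rw [List.append_assoc] at ht
    exact ⟨t, List.append_cancel_left ht⟩
  rw [sect_spec hhT v w, hv] at h1
  exact List.append_cancel_left h1

lemma K_disjoint {i j : A} (hij : i ≠ j) :
    rist (⊤ : Subgroup (Equiv.Perm (Vert A))) [i] ⊓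
      rist (⊤ : Subgroup (Equiv.Perm (Vert A))) [j] = ⊥ := by
  refine (Subgroup.eq_bot_iff_forall _).mpr fun s hs => ?_
  refine Equiv.ext fun w => ?_
  by_cases h1 : [i] <+: w
  · refine hs.2.2 w (fun h2 => ?_)
    obtain ⟨t1, ht1⟩ := h1
    obtain ⟨t2, ht2⟩ := h2
    rw [← ht1] at ht2
    simp only [List.cons_append, List.nil_append, List.cons.injEq] at ht2
    exact hij ht2.1.symm
  · exact hs.1.2 w h1

end Grp
section SG
variable {A : Type*}

open Equiv List Subgroup

lemma sectGrp_mono {H K : Subgroup (Equiv.Perm (Vert A))} (h : H ≤ K) (v : Vert A) :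
    sectGrp H v ≤ sectGrp K v :=
  Subgroup.closure_mono (Set.image_mono h)

lemma sectGrp_rist_le_K {G : Subgroup (Equiv.Perm (Vert A))} (hG : G ≤ treeAut A)
    (v : Vert A) (i : A) :
    sectGrp (rist G (v ++ [i])) v ≤ rist (⊤ : Subgroup (Equiv.Perm (Vert A))) [i] := by
  refine Subgroup.closure_le _ |>.mpr ?_
  rintro s ⟨h, hh, rfl⟩
  exact sect_rist_mem_K hG hh

lemma sectGrp_rist_infinite {G : Subgroup (Equiv.Perm (Vert A))} (hG : G ≤ treeAut A)
    (v : Vert A) (i : A)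
    (hinf : (rist G (v ++ [i]) : Set (Equiv.Perm (Vert A))).Infinite) :
    (sectGrp (rist G (v ++ [i])) v : Set (Equiv.Perm (Vert A))).Infinite := by
  have himg : ((fun g => sect g v) '' (rist G (v ++ [i]) :
      Set (Equiv.Perm (Vert A)))).Infinite := by
    refine hinf.image ?_
    intro h₁ h₁m h₂ h₂m heq
    have h₁T : h₁ ∈ treeAut A := hG h₁m.1
    have h₂v : h₂ v = v := rist_child_fix h₂m
    have h₁v : h₁ v = v := rist_child_fix h₁m
    have hmem : h₁⁻¹ * h₂ ∈ rist G (v ++ [i]) :=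
      (rist G (v ++ [i])).mul_mem ((rist G (v ++ [i])).inv_mem h₁m) h₂m
    have : sect (h₁⁻¹ * h₂) v = 1 := by
      simp only at heq
      rw [sect_mul ((treeAut A).inv_mem h₁T) (hG h₂m.1), h₂v, sect_inv h₁T h₁v, heq,
        inv_mul_cancel]
    have h1 := sect_inj_on_rist hG hmem this
    calc h₁ = h₁ * (h₁⁻¹ * h₂) := by rw [h1]; group
    _ = h₂ := by group
  exact himg.mono Subgroup.subset_closure

end SG
section Cyc
variable {A : Type*}

open Equiv List Subgroup

lemma stabSet_le {G : Subgroup (Equiv.Perm (Vert A))} {X : Set (Vert A)} :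
    stabSet G X ≤ G := fun _ h => h.1

lemma stabSet_fix {G : Subgroup (Equiv.Perm (Vert A))} {X : Set (Vert A)}
    {s : Equiv.Perm (Vert A)} (hs : s ∈ stabSet G X) {v : Vert A} (hv : v ∈ X) :
    s v = v := hs.2 v hv

/-- the stabilizer of `X` inside a cyclic group is cyclic, explicitly. -/
lemma stabSet_zpowers (g : Equiv.Perm (Vert A)) (X : Set (Vert A)) :
    ∃ m : ℤ, stabSet (Subgroup.zpowers g) X = Subgroup.zpowers (g ^ m) := by
  set S := stabSet (Subgroup.zpowers g) X with hS
  let E : AddSubgroup ℤ :=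
    { carrier := {n : ℤ | g ^ n ∈ S}
      zero_mem' := by
        show g ^ (0:ℤ) ∈ S
        rw [zpow_zero]; exact S.one_mem
      add_mem' := fun {a b} ha hb => by
        show g ^ (a + b) ∈ S
        rw [zpow_add]; exact S.mul_mem ha hb
      neg_mem' := fun {a} ha => by
        show g ^ (-a) ∈ S
        rw [zpow_neg]; exact S.inv_mem ha }
  obtain ⟨m, hm⟩ := Int.subgroup_cyclic E
  refine ⟨m, le_antisymm ?_ ?_⟩
  · intro s hs
    obtain ⟨n, hn⟩ := Subgroup.mem_zpowers_iff.mp hs.1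
    have hnE : n ∈ E := by show g ^ n ∈ S; rw [hn]; exact hs
    rw [hm, AddSubgroup.mem_closure_singleton] at hnE
    obtain ⟨t, ht⟩ := hnE
    refine Subgroup.mem_zpowers_iff.mpr ⟨t, ?_⟩
    rw [← zpow_mul, ← hn]
    congr 1
    rw [← ht, smul_eq_mul, mul_comm]
  · have hmE : m ∈ E := by
      rw [hm]; exact AddSubgroup.mem_closure_singleton.mpr ⟨1, one_smul _ _⟩
    exact (Subgroup.zpowers_le).mpr hmE

lemma sectGrp_stab_zpowers {G : Subgroup (Equiv.Perm (Vert A))} (hG : G ≤ treeAut A)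
    {g : Equiv.Perm (Vert A)} (hg : g ∈ G) (X : Set (Vert A)) {v : Vert A} (hv : v ∈ X) :
    ∃ z : Equiv.Perm (Vert A),
      sectGrp (stabSet (Subgroup.zpowers g) X) v = Subgroup.zpowers z := by
  obtain ⟨m, hm⟩ := stabSet_zpowers g X
  have hgm : g ^ m ∈ stabSet (Subgroup.zpowers g) X := by
    rw [hm]; exact Subgroup.mem_zpowers _
  have hgmG : g ^ m ∈ treeAut A := hG (G.zpow_mem hg m)
  have hgmv : (g ^ m) v = v := stabSet_fix hgm hv
  refine ⟨sect (g ^ m) v, le_antisymm ?_ ?_⟩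
  · refine Subgroup.closure_le _ |>.mpr ?_
    rintro s ⟨h, hh, rfl⟩
    rw [hm] at hh
    obtain ⟨t, ht⟩ := Subgroup.mem_zpowers_iff.mp hh
    refine Subgroup.mem_zpowers_iff.mpr ⟨t, ?_⟩
    rw [← sect_zpow hgmG hgmv t, ht]
  · refine Subgroup.zpowers_le.mpr ?_
    exact Subgroup.subset_closure ⟨g ^ m, hgm, rfl⟩

lemma inf_infinite_of_relindex {M : Type*} [Group M] {C B : Subgroup M}
    (hB : (B : Set M).Infinite) (h : C.relIndex B ≠ 0) :
    ((C ⊓ B : Subgroup M) : Set M).Infinite := by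
  have hBinf : Infinite B := Set.infinite_coe_iff.mpr hB
  have hcard : Nat.card B = 0 := Nat.card_eq_zero_of_infinite
  have hmul := Subgroup.index_mul_card (C.subgroupOf B)
  rw [hcard] at hmul
  have h2 : Nat.card (C.subgroupOf B) = 0 := by
    rcases Nat.mul_eq_zero.mp hmul with h' | h'
    · exact absurd h' h
    · exact h'
  have h3 : Infinite (C.subgroupOf B) :=
    (Nat.card_eq_zero.mp h2).resolve_left (not_isEmpty_of_nonempty _)
  rw [← Subgroup.inf_subgroupOf_right] at h3
  have e := Subgroup.subgroupOfEquivOfLe (inf_le_right : C ⊓ B ≤ B)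
  exact Set.infinite_coe_iff.mp (e.toEquiv.infinite_iff.mp h3)

end Cyc
section MainFalse

open Equiv List Subgroup

lemma main_false {d : ℕ} (hd : 2 ≤ d) (G : Subgroup (Equiv.Perm (Vert (Fin d))))
    (hG : G ≤ treeAut (Fin d))
    (hr : ∀ v : Vert (Fin d), (rist G v : Set (Equiv.Perm (Vert (Fin d)))).Infinite)
    {g : Equiv.Perm (Vert (Fin d))} (hg : g ∈ G) (X : Set (Vert (Fin d)))
    {v : Vert (Fin d)} (hv : v ∈ X)
    (hrel : (sectGrp (stabSet (Subgroup.zpowers g) X) v).relIndex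
      (sectGrp (vstab G v) v) ≠ 0) : False := by
  set i0 : Fin d := ⟨0, by omega⟩ with hi0
  set i1 : Fin d := ⟨1, by omega⟩ with hi1
  have hi : i0 ≠ i1 := by simp [hi0, hi1, Fin.ext_iff]
  set A0 := sectGrp (rist G (v ++ [i0])) v with hA0
  set A1 := sectGrp (rist G (v ++ [i1])) v with hA1
  set D := sectGrp (vstab G v) v with hD
  set C := sectGrp (stabSet (Subgroup.zpowers g) X) v with hCdef
  have hA0D : A0 ≤ D := sectGrp_mono (rist_child_le_vstab v i0) v
  have hA1D : A1 ≤ D := sectGrp_mono (rist_child_le_vstab v i1) v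
  have hrel0 : C.relIndex A0 ≠ 0 :=
    fun h0 => hrel (Subgroup.relIndex_eq_zero_of_le_right hA0D h0)
  have hrel1 : C.relIndex A1 ≠ 0 :=
    fun h0 => hrel (Subgroup.relIndex_eq_zero_of_le_right hA1D h0)
  have hinf0 := inf_infinite_of_relindex (sectGrp_rist_infinite hG v i0 (hr _)) hrel0
  have hinf1 := inf_infinite_of_relindex (sectGrp_rist_infinite hG v i1 (hr _)) hrel1
  obtain ⟨z, hz⟩ := sectGrp_stab_zpowers hG hg X hv
  rw [← hCdef] at hz
  have hCinf : (C : Set (Equiv.Perm (Vert (Fin d)))).Infinite :=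
    hinf0.mono (SetLike.coe_subset_coe.mpr inf_le_left)
  have hzord : ¬ IsOfFinOrder z := by
    rw [hz] at hCinf
    exact infinite_zpowers.mp hCinf
  obtain ⟨a, ha⟩ := (hinf0.diff (Set.finite_singleton 1)).nonempty
  obtain ⟨b, hb⟩ := (hinf1.diff (Set.finite_singleton 1)).nonempty
  have haC : a ∈ C := (Subgroup.mem_inf.mp ha.1).1
  have haA : a ∈ A0 := (Subgroup.mem_inf.mp ha.1).2
  have hbC : b ∈ C := (Subgroup.mem_inf.mp hb.1).1
  have hbA : b ∈ A1 := (Subgroup.mem_inf.mp hb.1).2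
  rw [hz] at haC hbC
  obtain ⟨p, hp⟩ := Subgroup.mem_zpowers_iff.mp haC
  obtain ⟨q, hq⟩ := Subgroup.mem_zpowers_iff.mp hbC
  have hp0 : p ≠ 0 := by
    rintro rfl
    exact ha.2 (by rw [← hp, zpow_zero]; rfl)
  have hq0 : q ≠ 0 := by
    rintro rfl
    exact hb.2 (by rw [← hq, zpow_zero]; rfl)
  have hmem : z ^ (p * q) ∈ A0 ⊓ A1 := by
    refine Subgroup.mem_inf.mpr ⟨?_, ?_⟩
    · rw [zpow_mul, hp]; exact A0.zpow_mem haA q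
    · rw [mul_comm, zpow_mul, hq]; exact A1.zpow_mem hbA p
  have hbot : A0 ⊓ A1 ≤ ⊥ := by
    calc A0 ⊓ A1 ≤ rist (⊤ : Subgroup (Equiv.Perm (Vert (Fin d)))) [i0] ⊓
        rist (⊤ : Subgroup (Equiv.Perm (Vert (Fin d)))) [i1] :=
          inf_le_inf (sectGrp_rist_le_K hG v i0) (sectGrp_rist_le_K hG v i1)
    _ = ⊥ := K_disjoint hi
  have hone : z ^ (p * q) = 1 := Subgroup.mem_bot.mp (hbot hmem)
  have : ((orderOf z : ℤ)) ∣ p * q := orderOf_dvd_iff_zpow_eq_one.mpr hone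
  rw [orderOf_eq_zero hzord] at this
  have := zero_dvd_iff.mp (by exact_mod_cast this)
  exact (mul_ne_zero hp0 hq0) this

end MainFalse
/-- Lemma 3.4: a group with the subgroup induction property all of whose rigid
vertex stabilizers are infinite is torsion. -/
theorem statement4 {d : ℕ} (hd : 2 ≤ d) (G : Subgroup (Equiv.Perm (Vert (Fin d))))
    (hG : G ≤ treeAut (Fin d)) (hsip : HasSGIP G)
    (hr : ∀ v : Vert (Fin d), (rist G v : Set (Equiv.Perm (Vert (Fin d)))).Infinite) :
    ∀ g ∈ G, IsOfFinOrder g := by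
  intro g hg
  set H := Subgroup.zpowers g with hH
  have hHfg : H.FG := ⟨{g}, by simp [hH, Subgroup.zpowers_eq_closure]⟩
  have hHG : H ≤ G := Subgroup.zpowers_le.mpr hg
  obtain ⟨X, ⟨hXfin, hXtrans⟩, hprop⟩ := hsip H hHG hHfg
  have hall : ∀ v ∈ X, sectGrp (stabSet H X) v = ⊥ := by
    intro v hv
    rcases hprop v hv with h | h
    · exact h
    · exact absurd h (fun h' => main_false hd G hG hr hg X hv h')
  -- a bound on the lengths of the vertices in X
  obtain ⟨N, hN⟩ : ∃ N : ℕ, ∀ u ∈ X, u.length ≤ N := by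
    obtain ⟨N, hNub⟩ := (hXfin.image List.length).bddAbove
    exact ⟨N, fun u hu => hNub (Set.mem_image_of_mem _ hu)⟩
  set F : Set (Vert (Fin d)) := {l | l.length ≤ N} with hF
  have hFfin : F.Finite := List.finite_length_le (Fin d) N
  haveI : Finite ↥F := hFfin.to_subtype
  haveI : Finite ↥X := hXfin.to_subtype
  -- first pigeonhole : some positive power of g fixes X pointwise
  obtain ⟨k, hk, hgk⟩ : ∃ k : ℕ, 0 < k ∧ ∀ u ∈ X, (g ^ k) u = u := by
    have hmemF : ∀ (n : ℕ) (u : Vert (Fin d)), u ∈ X → (g ^ n) u ∈ F := by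
      intro n u hu
      have : ((g ^ n) u).length = u.length := (hG (G.pow_mem hg n)).1 u
      simpa [hF, this] using hN u hu
    obtain ⟨n₁, n₂, hne, hfe⟩ := Finite.exists_ne_map_eq_of_infinite
      (fun n : ℕ => fun u : X => (⟨(g ^ n) u.1, hmemF n u.1 u.2⟩ : F))
    rcases hne.lt_or_gt with hlt | hlt
    · refine ⟨n₂ - n₁, by omega, fun u hu => ?_⟩
      have h1 : (g ^ n₁) u = (g ^ n₂) u := by
        have := congrFun hfe ⟨u, hu⟩
        exact congrArg Subtype.val this
      have h2 : (g ^ n₁) ((g ^ (n₂ - n₁)) u) = (g ^ n₁) u := by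
        rw [← Equiv.Perm.mul_apply, ← pow_add]
        rw [show n₁ + (n₂ - n₁) = n₂ by omega]
        exact h1.symm
      exact (g ^ n₁).injective h2
    · refine ⟨n₁ - n₂, by omega, fun u hu => ?_⟩
      have h1 : (g ^ n₁) u = (g ^ n₂) u := by
        have := congrFun hfe ⟨u, hu⟩
        exact congrArg Subtype.val this
      have h2 : (g ^ n₂) ((g ^ (n₁ - n₂)) u) = (g ^ n₂) u := by
        rw [← Equiv.Perm.mul_apply, ← pow_add]
        rw [show n₂ + (n₁ - n₂) = n₁ by omega]
        exact h1
      exact (g ^ n₂).injective h2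
  set s := g ^ k with hs
  have hsG : s ∈ G := G.pow_mem hg k
  have hsT : s ∈ treeAut (Fin d) := hG hsG
  have hsS : s ∈ stabSet H X := ⟨H.pow_mem (Subgroup.mem_zpowers g) k, hgk⟩
  -- s fixes every word of length > N
  have hsfix : ∀ w : Vert (Fin d), N < w.length → s w = w := by
    intro w hw
    obtain ⟨n, hn, -⟩ := hXtrans (fun i => w.getD i ⟨0, by omega⟩)
    have hlen : (List.ofFn fun i : Fin n => w.getD i.1 ⟨0, by omega⟩).length = n :=
      List.length_ofFn
    have hnN : n ≤ N := hlen ▸ hN _ hn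
    have hu : (List.ofFn fun i : Fin n => w.getD i.1 ⟨0, by omega⟩) = w.take n := by
      apply List.ext_getElem
      · rw [hlen, List.length_take]
        omega
      · intro i h1 h2
        have hiw : i < w.length := by omega
        simp [List.getD_eq_getElem?_getD, List.getElem?_eq_getElem hiw]
    rw [hu] at hn
    have hsu : s (w.take n) = w.take n := stabSet_fix hsS hn
    have hsect : sect s (w.take n) = 1 := by
      have hmem : sect s (w.take n) ∈ sectGrp (stabSet H X) (w.take n) :=
        Subgroup.subset_closure ⟨s, hsS, rfl⟩
      rw [hall _ hn] at hmem
      exact Subgroup.mem_bot.mp hmem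
    conv_lhs => rw [← List.take_append_drop n w]
    rw [sect_spec hsT (w.take n) (w.drop n), hsu, hsect]
    show w.take n ++ w.drop n = w
    exact List.take_append_drop n w
  -- second pigeonhole : two powers of s coincide
  have hsnfix : ∀ (n : ℕ) (w : Vert (Fin d)), N < w.length → (s ^ n) w = w :=
    fun n w hw => pow_fix (hsfix w hw) n
  have hmemF2 : ∀ (n : ℕ) (w : Vert (Fin d)), w ∈ F → (s ^ n) w ∈ F := by
    intro n w hwF
    have : ((s ^ n) w).length = w.length := (hG (G.pow_mem hsG n)).1 w
    simpa [hF, this] using hwF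
  obtain ⟨n₁, n₂, hne, hfe⟩ := Finite.exists_ne_map_eq_of_infinite
    (fun n : ℕ => fun w : F => (⟨(s ^ n) w.1, hmemF2 n w.1 w.2⟩ : F))
  have key : ∀ (m₁ m₂ : ℕ), m₁ < m₂ →
      ((fun n : ℕ => fun w : F => (⟨(s ^ n) w.1, hmemF2 n w.1 w.2⟩ : F)) m₁ =
       (fun n : ℕ => fun w : F => (⟨(s ^ n) w.1, hmemF2 n w.1 w.2⟩ : F)) m₂) →
      IsOfFinOrder g := by
    intro m₁ m₂ hlt hfe
    have hpow : s ^ (m₂ - m₁) = 1 := by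
      refine Equiv.ext fun w => ?_
      by_cases hwN : N < w.length
      · rw [hsnfix _ w hwN]; rfl
      · have hwF : w ∈ F := by simpa [hF] using Nat.le_of_not_lt hwN
        have h1 : (s ^ m₁) w = (s ^ m₂) w := by
          have := congrFun hfe ⟨w, hwF⟩
          exact congrArg Subtype.val this
        have h2 : (s ^ m₁) ((s ^ (m₂ - m₁)) w) = (s ^ m₁) w := by
          rw [← Equiv.Perm.mul_apply, ← pow_add, show m₁ + (m₂ - m₁) = m₂ by omega]
          exact h1.symm
        rw [(s ^ m₁).injective h2]
        rfl
    refine isOfFinOrder_iff_pow_eq_one.mpr ⟨k * (m₂ - m₁), ?_, ?_⟩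
    · have : 0 < m₂ - m₁ := by omega
      positivity
    · rw [pow_mul, ← hs, hpow]
  rcases hne.lt_or_gt with hlt | hlt
  · exact key n₁ n₂ hlt hfe
  · exact key n₂ n₁ hlt hfe.symm
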